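/- Let E be a compact metric space, A ⊆ E a clopen subset, and φ : E → E a continuous map. Let X, Y, S ⊆ E be subsets such that X ⊆ A, Y ⊆ E \ A, φ(X) ⊆ A, and every accumulation point of S lies in X ∪ Y. Then the set {p ∈ S : p ∈ A and φ(p) ∉ A} is finite. -/

import Mathlib

/-- Let `E` be a compact metric space, `A ⊆ E` clopen, `φ : E → E` continuous,
and `X, Y, S ⊆ E` with `X ⊆ A`, `Y ⊆ E \ A`, `φ(X) ⊆ A`, such that every
accumulation point of `S` lies in `X ∪ Y`.  Then only finitely many points of
`S` lie in `A` and are moved outside of `A` by `φ`. -/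
theorem stmt6 {E : Type*} [MetricSpace E] [CompactSpace E]
    (A : Set E) (hA : IsClopen A) (φ : E → E) (hφ : Continuous φ)
    (X Y S : Set E) (hX : X ⊆ A) (hY : Y ⊆ Aᶜ) (hφX : φ '' X ⊆ A)
    (hacc : ∀ x : E, AccPt x (Filter.principal S) → x ∈ X ∪ Y) :
    {p | p ∈ S ∧ p ∈ A ∧ φ p ∉ A}.Finite := by
  by_contra hinf
  rw [← Set.not_infinite, not_not] at hinf
  obtain ⟨x, hx⟩ := hinf.exists_accPt_principal
  set T := {p | p ∈ S ∧ p ∈ A ∧ φ p ∉ A}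
  have hxT : x ∈ closure T :=
    mem_closure_iff_clusterPt.2 (AccPt.clusterPt hx)
  have hxA : x ∈ A := hA.isClosed.closure_subset_iff.2 (fun p hp => hp.2.1) hxT
  have hxφ : φ x ∉ A := by
    have hcl : IsClosed (φ ⁻¹' Aᶜ) := (hA.isOpen.isClosed_compl).preimage hφ
    have : x ∈ φ ⁻¹' Aᶜ := hcl.closure_subset
      ((closure_mono (fun p hp => hp.2.2)) hxT)
    exact this
  have hxS : AccPt x (Filter.principal S) :=
    hx.mono (Filter.principal_mono.2 fun p hp => hp.1)
  rcases hacc x hxS with h | h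
  · exact hxφ (hφX ⟨x, h, rfl⟩)
  · exact hY h hxA
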